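/- For a random vector ε in R^p with E(‖ε‖⁻¹) and E(‖ε‖²) finite and ‖ε‖ > 0 almost surely, {E(‖ε‖⁻¹)}² · E(‖ε‖²) ≥ 1, with equality if and only if ‖ε‖ is almost surely constant. -/
import Mathlib
set_option maxHeartbeats 1000000

open MeasureTheory ProbabilityTheory

lemma tangent_inv_aux (x m : ℝ) (hx : 0 < x) (hm : 0 < m) :
    2 / m - x / m ^ 2 ≤ x⁻¹ := by
  have h : x⁻¹ - (2 / m - x / m ^ 2) = (x - m) ^ 2 / (x * m ^ 2) := by
    field_simp
    ring
  have hnn : 0 ≤ (x - m) ^ 2 / (x * m ^ 2) := by positivity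
  linarith [h ▸ hnn]

theorem are_ss_cq_ge_one
    {p : ℕ} {Ω : Type*} [MeasureSpace Ω] [IsProbabilityMeasure (ℙ : Measure Ω)]
    (ε : Ω → EuclideanSpace ℝ (Fin p)) (hm : Measurable ε)
    (hpos : ∀ᵐ ω, 0 < ‖ε ω‖)
    (hinv : Integrable (fun ω => ‖ε ω‖⁻¹))
    (hsq : Integrable (fun ω => ‖ε ω‖ ^ 2)) :
    1 ≤ (∫ ω, ‖ε ω‖⁻¹) ^ 2 * ∫ ω, ‖ε ω‖ ^ 2 ∧
      ((∫ ω, ‖ε ω‖⁻¹) ^ 2 * ∫ ω, ‖ε ω‖ ^ 2 = 1 ↔ ∃ c : ℝ, ∀ᵐ ω, ‖ε ω‖ = c) := by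
  have hXmeas : Measurable (fun ω => ‖ε ω‖) := hm.norm
  -- integrability of X
  have hXint : Integrable (fun ω => ‖ε ω‖) := by
    refine ((integrable_const (1:ℝ)).add hsq).mono' hXmeas.aestronglyMeasurable ?_
    filter_upwards with ω
    have h0 : (0:ℝ) ≤ ‖ε ω‖ := norm_nonneg _
    simp only [Pi.add_apply, Real.norm_eq_abs, abs_of_nonneg h0]
    nlinarith [sq_nonneg (‖ε ω‖ - 1)]
  set m : ℝ := ∫ ω, ‖ε ω‖ with hmdef
  set A : ℝ := ∫ ω, ‖ε ω‖⁻¹ with hAdef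
  set B : ℝ := ∫ ω, ‖ε ω‖ ^ 2 with hBdef
  have hm_pos : 0 < m := by
    rw [hmdef]
    refine (integral_pos_iff_support_of_nonneg_ae ?_ hXint).2 ?_
    · filter_upwards with ω using norm_nonneg _
    · rw [pos_iff_ne_zero]
      intro h0
      have hz : (ℙ : Measure Ω) {ω | ‖ε ω‖ ≠ 0} = 0 := by
        simpa [Function.support] using h0
      have h1 : ∀ᵐ ω, ‖ε ω‖ = 0 := by
        rw [ae_iff]; simpa using hz
      obtain ⟨ω, hω1, hω2⟩ := (hpos.and h1).exists
      exact absurd hω2 (ne_of_gt hω1)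
  have hm_ne : m ≠ 0 := ne_of_gt hm_pos
  -- inequality (2): 1/m ≤ A
  have hA : 1 / m ≤ A := by
    have hmono : ∫ ω, (2 / m - ‖ε ω‖ / m ^ 2) ≤ A := by
      refine integral_mono_ae ((integrable_const _).sub (hXint.div_const _)) hinv ?_
      filter_upwards [hpos] with ω hx
      exact tangent_inv_aux _ _ hx hm_pos
    have hcalc : ∫ ω, (2 / m - ‖ε ω‖ / m ^ 2) = 2 / m - m / m ^ 2 := by
      rw [integral_sub (integrable_const _) (hXint.div_const _)]
      simp [integral_div, hmdef]
    rw [hcalc] at hmono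
    have : 2 / m - m / m ^ 2 = 1 / m := by field_simp; ring
    linarith [this ▸ hmono]
  have hA_pos : 0 < A := lt_of_lt_of_le (by positivity) hA
  have hAm : 1 ≤ A * m := by
    rw [div_le_iff₀ hm_pos] at hA; linarith
  -- variance integrability and computation
  have hvint : Integrable (fun ω => (‖ε ω‖ - m) ^ 2) := by
    have heq : (fun ω => (‖ε ω‖ - m) ^ 2)
        = fun ω => ‖ε ω‖ ^ 2 - (2 * m) * ‖ε ω‖ + m ^ 2 := by
      ext ω; ring
    rw [heq]
    exact (hsq.sub (hXint.const_mul _)).add (integrable_const _)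
  have hvcalc : ∫ ω, (‖ε ω‖ - m) ^ 2 = B - m ^ 2 := by
    have heq : (fun ω => (‖ε ω‖ - m) ^ 2)
        = fun ω => ‖ε ω‖ ^ 2 - (2 * m) * ‖ε ω‖ + m ^ 2 := by
      ext ω; ring
    have h1 : Integrable (fun ω => ‖ε ω‖ ^ 2 - 2 * m * ‖ε ω‖) :=
      hsq.sub (hXint.const_mul _)
    have h2 : Integrable (fun ω => 2 * m * ‖ε ω‖) := hXint.const_mul _
    rw [heq, integral_add h1 (integrable_const _),
      integral_sub hsq h2, integral_const_mul]
    simp [← hmdef, ← hBdef]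
    ring
  have hB : m ^ 2 ≤ B := by
    have h0 : 0 ≤ ∫ ω, (‖ε ω‖ - m) ^ 2 := integral_nonneg fun ω => sq_nonneg _
    linarith [hvcalc ▸ h0]
  have hmain : 1 ≤ A ^ 2 * B := by
    nlinarith [hAm, mul_le_mul_of_nonneg_left hB (sq_nonneg A), sq_nonneg A]
  refine ⟨hmain, ?_, ?_⟩
  · -- equality → constant
    intro heq
    have hBm : B = m ^ 2 := by
      nlinarith [hAm, sq_nonneg A, pow_pos hA_pos 2, mul_le_mul_of_nonneg_left hB (sq_nonneg A)]
    have hzero : ∫ ω, (‖ε ω‖ - m) ^ 2 = 0 := by rw [hvcalc, hBm]; ring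
    have hae : (fun ω => (‖ε ω‖ - m) ^ 2) =ᵐ[(ℙ : Measure Ω)] 0 :=
      (integral_eq_zero_iff_of_nonneg (fun ω => sq_nonneg _) hvint).1 hzero
    refine ⟨m, ?_⟩
    filter_upwards [hae] with ω hω
    have : (‖ε ω‖ - m) ^ 2 = 0 := hω
    have := pow_eq_zero_iff (two_ne_zero) |>.1 this
    linarith [sub_eq_zero.1 this]
  · -- constant → equality
    rintro ⟨c, hc⟩
    obtain ⟨ω0, hω1, hω2⟩ := (hpos.and hc).exists
    have hc_pos : 0 < c := hω2 ▸ hω1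
    have hAc : A = c⁻¹ := by
      rw [hAdef]
      rw [integral_congr_ae (hc.mono fun ω hω => by rw [hω])]
      simp
    have hBc : B = c ^ 2 := by
      rw [hBdef]
      rw [integral_congr_ae (hc.mono fun ω hω => by rw [hω])]
      simp
    rw [hAc, hBc]
    field_simp
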